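/- The generating function Σ_{n≥0} ap(n) x^n of the total number of asymmetric peaks over all Dyck paths of length 2(n+3) equals (1/x^3)·((1-3x)/((1-x)·sqrt(1-4x)) − 1). -/

import Mathlib

open PowerSeries

/-- A path (`true` = up step, `false` = down step) never goes below the x-axis. -/
def DyckNonneg (p : List Bool) : Prop :=
  ∀ q : List Bool, q <+: p → q.count false ≤ q.count true

/-- `p` is a Dyck path. -/
def IsDyck (p : List Bool) : Prop :=
  DyckNonneg p ∧ p.count true = p.count false

/-- Dyck paths of length `m` with a distinguished asymmetric peak
(a maximal mountain `u^a d^b` with `a ≠ b`). -/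
def AsymPeakMarked (m : ℕ) : Type :=
  { q : List Bool × ℕ × ℕ × List Bool //
      1 ≤ q.2.1 ∧ 1 ≤ q.2.2.1 ∧ q.2.1 ≠ q.2.2.1 ∧
      q.1.getLast? ≠ some true ∧
      q.2.2.2.head? ≠ some false ∧
      IsDyck (q.1 ++ List.replicate q.2.1 true ++ List.replicate q.2.2.1 false ++ q.2.2.2) ∧
      (q.1 ++ List.replicate q.2.1 true ++ List.replicate q.2.2.1 false ++ q.2.2.2).length = m }

/-- ap(n): the total number of asymmetric peaks over all Dyck paths of length 2(n+3). -/
noncomputable def ap (n : ℕ) : ℕ := Nat.card (AsymPeakMarked (2 * (n + 3)))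

/-- The series 1/sqrt(1-4x) = Σ_{n≥0} binom(2n,n) x^n. -/
noncomputable def invSqrtGF : PowerSeries ℚ := PowerSeries.mk fun n => ((2 * n).choose n : ℚ)

namespace ApGFAux

open Finset List
open scoped Classical

lemma count_add_count (l : List Bool) : l.count true + l.count false = l.length := by
  induction l with
  | nil => rfl
  | cons a t ih => cases a <;> simp [List.count_cons] <;> omega

/-- All lists of booleans of a given length. -/
def allB : ℕ → Finset (List Bool)
  | 0 => {[]}
  | n + 1 => (allB n).biUnion fun l => {true :: l, false :: l}

lemma mem_allB {n : ℕ} {l : List Bool} : l ∈ allB n ↔ l.length = n := by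
  induction n generalizing l with
  | zero => cases l <;> simp [allB]
  | succ n ih =>
    cases l with
    | nil => simp [allB, ih]
    | cons x t =>
      simp only [allB, Finset.mem_biUnion, Finset.mem_insert, Finset.mem_singleton]
      constructor
      · rintro ⟨a, ha, h | h⟩ <;> simp_all [ih]
      · intro h
        refine ⟨t, ih.mpr (by simpa using h), ?_⟩
        cases x <;> simp

/-- Nonnegative paths of length `ℓ` from `0` to height `h`. -/
noncomputable def Wset (ℓ h : ℕ) : Finset (List Bool) :=
  (allB ℓ).filter fun l => DyckNonneg l ∧ l.count true = l.count false + h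

noncomputable def w (ℓ h : ℕ) : ℕ := (Wset ℓ h).card

lemma mem_Wset {ℓ h : ℕ} {l : List Bool} :
    l ∈ Wset ℓ h ↔ l.length = ℓ ∧ DyckNonneg l ∧ l.count true = l.count false + h := by
  simp [Wset, mem_allB, and_assoc]

/-- Paths of length `ℓ` from height `H` to `0` staying nonnegative. -/
def CoNonneg (H : ℕ) (l : List Bool) : Prop :=
  ∀ q : List Bool, q <+: l → q.count false ≤ H + q.count true

noncomputable def W'set (ℓ H : ℕ) : Finset (List Bool) :=
  (allB ℓ).filter fun l => CoNonneg H l ∧ l.count false = H + l.count true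

noncomputable def w' (ℓ H : ℕ) : ℕ := (W'set ℓ H).card

lemma mem_W'set {ℓ H : ℕ} {l : List Bool} :
    l ∈ W'set ℓ H ↔ l.length = ℓ ∧ CoNonneg H l ∧ l.count false = H + l.count true := by
  simp [W'set, mem_allB, and_assoc]

/-! ### Reverse-negate involution -/

def rn (l : List Bool) : List Bool := (l.map not).reverse

@[simp] lemma rn_rn (l : List Bool) : rn (rn l) = l := by
  simp [rn, List.map_reverse, Function.comp_def]

@[simp] lemma length_rn (l : List Bool) : (rn l).length = l.length := by simp [rn]

@[simp] lemma count_rn_true (l : List Bool) : (rn l).count true = l.count false := by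
  induction l with
  | nil => rfl
  | cons a t ih => cases a <;> simp [rn, List.count_cons] at * <;> omega

@[simp] lemma count_rn_false (l : List Bool) : (rn l).count false = l.count true := by
  induction l with
  | nil => rfl
  | cons a t ih => cases a <;> simp [rn, List.count_cons] at * <;> omega

lemma rn_append (x y : List Bool) : rn (x ++ y) = rn y ++ rn x := by simp [rn]

@[simp] lemma rn_replicate_true (k : ℕ) : rn (List.replicate k true) = List.replicate k false := by
  simp [rn, List.map_replicate, List.reverse_replicate]

@[simp] lemma rn_replicate_false (k : ℕ) : rn (List.replicate k false) = List.replicate k true := by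
  simp [rn, List.map_replicate, List.reverse_replicate]

@[simp] lemma getLast?_rn (l : List Bool) : (rn l).getLast? = l.head?.map not := by
  simp [rn, List.getLast?_reverse, List.head?_map]

@[simp] lemma head?_rn (l : List Bool) : (rn l).head? = l.getLast?.map not := by
  simp [rn, List.head?_reverse, List.head?_map]

/-- Key transfer: reverse-negate of a `W'`-path is a `W`-path. -/
lemma rn_mem_Wset {ℓ H : ℕ} {l : List Bool} (hl : l ∈ W'set ℓ H) : rn l ∈ Wset ℓ H := by
  rw [mem_W'set] at hl
  obtain ⟨hlen, hnn, hcnt⟩ := hl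
  rw [mem_Wset]
  refine ⟨by simp [hlen], ?_, by simp; omega⟩
  intro q hq
  obtain ⟨t, ht⟩ := hq
  have hl' : l = rn t ++ rn q := by
    have := congrArg rn ht
    rw [rn_append, rn_rn] at this; exact this.symm
  have h1 : (rn t).count false ≤ H + (rn t).count true := hnn (rn t) ⟨rn q, hl'.symm⟩
  have h2 : l.count false = (rn t).count false + (rn q).count false := by
    rw [hl']; simp [List.count_append]
  have h3 : l.count true = (rn t).count true + (rn q).count true := by
    rw [hl']; simp [List.count_append]
  have e1 : (rn q).count false = q.count true := by simp
  have e2 : (rn q).count true = q.count false := by simp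
  omega

/-- Key transfer: reverse-negate of a `W`-path is a `W'`-path. -/
lemma rn_mem_W'set {ℓ h : ℕ} {l : List Bool} (hl : l ∈ Wset ℓ h) : rn l ∈ W'set ℓ h := by
  rw [mem_Wset] at hl
  obtain ⟨hlen, hnn, hcnt⟩ := hl
  rw [mem_W'set]
  refine ⟨by simp [hlen], ?_, by simp; omega⟩
  intro q hq
  obtain ⟨t, ht⟩ := hq
  have hl' : l = rn t ++ rn q := by
    have := congrArg rn ht
    rw [rn_append, rn_rn] at this; exact this.symm
  have h1 : (rn t).count false ≤ (rn t).count true := hnn (rn t) ⟨rn q, hl'.symm⟩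
  have h2 : l.count false = (rn t).count false + (rn q).count false := by
    rw [hl']; simp [List.count_append]
  have h3 : l.count true = (rn t).count true + (rn q).count true := by
    rw [hl']; simp [List.count_append]
  have e1 : (rn q).count false = q.count true := by simp
  have e2 : (rn q).count true = q.count false := by simp
  have e3 : (rn t).count false = t.count true := by simp
  have e4 : (rn t).count true = t.count false := by simp
  omega

lemma w'_eq_w (ℓ H : ℕ) : w' ℓ H = w ℓ H := by
  exact Finset.card_nbij' rn rn (fun l hl => rn_mem_Wset hl) (fun l hl => rn_mem_W'set hl)
    (fun l _ => rn_rn l) (fun l _ => rn_rn l)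

end ApGFAux
namespace ApGFAux
open Finset List

lemma w_zero (h : ℕ) : w 0 h = if h = 0 then 1 else 0 := by
  have : Wset 0 h = if h = 0 then {([] : List Bool)} else ∅ := by
    split_ifs with hh
    · subst hh
      ext l
      simp only [mem_Wset, Finset.mem_singleton]
      constructor
      · rintro ⟨hl, -, -⟩; exact List.length_eq_zero_iff.mp hl
      · rintro rfl
        refine ⟨rfl, ?_, rfl⟩
        intro q hq
        simp [List.prefix_nil.mp hq]
    · ext l
      simp only [mem_Wset, Finset.notMem_empty, iff_false, not_and]
      intro hl
      have : l = [] := List.length_eq_zero_iff.mp hl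
      subst this
      intro _
      simp; omega
  rw [w, this]
  split_ifs <;> simp

lemma w_eq_zero_of_lt {ℓ h : ℕ} (hlt : ℓ < h) : w ℓ h = 0 := by
  rw [w, Finset.card_eq_zero]
  ext l
  simp only [mem_Wset, Finset.notMem_empty, iff_false, not_and]
  intro hl hnn hc
  have := count_add_count l
  have : l.count true ≤ l.length := List.count_le_length
  omega

lemma exists_two_mul {ℓ h : ℕ} (hne : w ℓ h ≠ 0) : ∃ q, ℓ = 2 * q + h := by
  have : (Wset ℓ h).Nonempty := Finset.card_ne_zero.mp (by simpa [w] using hne)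
  obtain ⟨l, hl⟩ := this
  rw [mem_Wset] at hl
  obtain ⟨hlen, -, hc⟩ := hl
  have := count_add_count l
  exact ⟨l.count false, by omega⟩

lemma prefix_append_cases {q x y : List Bool} (h : q <+: x ++ y) :
    q <+: x ∨ ∃ r, r <+: y ∧ q = x ++ r := by
  obtain ⟨t, ht⟩ := h
  rcases List.append_eq_append_iff.mp ht with ⟨a', ha1, _⟩ | ⟨c', hc1, hc2⟩
  · exact Or.inl ⟨a', ha1.symm⟩
  · exact Or.inr ⟨c', ⟨t, hc2.symm⟩, hc1⟩

lemma prefix_replicate {r : List Bool} {n : ℕ} {b : Bool} (h : r <+: List.replicate n b) :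
    r = List.replicate r.length b ∧ r.length ≤ n := by
  constructor
  · rw [List.eq_replicate_iff]
    exact ⟨rfl, fun x hx => List.eq_of_mem_replicate (h.subset hx)⟩
  · simpa using h.length_le

lemma dyckNonneg_append_replicate {A : List Bool} {c : ℕ} (hA : DyckNonneg A) :
    DyckNonneg (A ++ List.replicate c true) := by
  intro q hq
  rcases prefix_append_cases hq with h | ⟨r, hr, rfl⟩
  · exact hA q h
  · obtain ⟨hrep, hle⟩ := prefix_replicate hr
    have h1 := hA A (List.prefix_refl A)
    rw [hrep]
    simp [List.count_append, List.count_replicate]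
    omega

lemma nonneg_snoc {a : List Bool} (hnn : DyckNonneg a) (x : Bool)
    (hx : x = true ∨ a.count false + 1 ≤ a.count true) : DyckNonneg (a ++ [x]) := by
  intro q hq
  rcases prefix_append_cases hq with h | ⟨r, hr, rfl⟩
  · exact hnn q h
  · have hra : r = [] ∨ r = [x] := by
      obtain ⟨t, ht⟩ := hr
      cases r with
      | nil => exact Or.inl rfl
      | cons y ys =>
        simp only [List.cons_append] at ht
        injection ht with h1 h2
        have hys : ys = [] := by cases ys <;> simp_all
        exact Or.inr (by simp [h1, hys])
    have h1 := hnn a (List.prefix_refl a)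
    rcases hra with rfl | rfl
    · simpa using h1
    · rcases hx with rfl | hx
      · simp [List.count_append]; omega
      · cases x <;> simp [List.count_append] <;> omega

lemma w_succ_pos (ℓ h : ℕ) : w (ℓ + 1) (h + 1) = w ℓ h + w ℓ (h + 2) := by
  have hset : Wset (ℓ + 1) (h + 1) =
      ((Wset ℓ h).image (· ++ [true])) ∪ ((Wset ℓ (h + 2)).image (· ++ [false])) := by
    ext l
    simp only [Finset.mem_union, Finset.mem_image, mem_Wset]
    constructor
    · rintro ⟨hlen, hnn, hc⟩
      have hne : l ≠ [] := by intro h; subst h; simp at hlen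
      have hdec := List.dropLast_append_getLast hne
      have hnnd : DyckNonneg l.dropLast := fun q hq => hnn q (hq.trans (List.dropLast_prefix l))
      have hlen' : l.dropLast.length = ℓ := by simp [List.length_dropLast, hlen]
      cases hl : l.getLast hne with
      | true =>
        have hdec' : l.dropLast ++ [true] = l := by rw [← hl]; exact hdec
        have hct : l.count true = l.dropLast.count true + 1 := by rw [← hdec']; simp
        have hcf : l.count false = l.dropLast.count false := by rw [← hdec']; simp
        exact Or.inl ⟨l.dropLast, ⟨hlen', hnnd, by omega⟩, hdec'⟩
      | false =>
        have hdec' : l.dropLast ++ [false] = l := by rw [← hl]; exact hdec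
        have hct : l.count true = l.dropLast.count true := by rw [← hdec']; simp
        have hcf : l.count false = l.dropLast.count false + 1 := by rw [← hdec']; simp
        exact Or.inr ⟨l.dropLast, ⟨hlen', hnnd, by omega⟩, hdec'⟩
    · rintro (⟨a, ⟨hlen, hnn, hc⟩, rfl⟩ | ⟨a, ⟨hlen, hnn, hc⟩, rfl⟩)
      · exact ⟨by simp [hlen], nonneg_snoc hnn _ (Or.inl rfl),
          by simp [List.count_append]; omega⟩
      · exact ⟨by simp [hlen], nonneg_snoc hnn _ (Or.inr (by omega)),
          by simp [List.count_append]; omega⟩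
  have hdisj : Disjoint ((Wset ℓ h).image (· ++ [true])) ((Wset ℓ (h + 2)).image (· ++ [false])) := by
    rw [Finset.disjoint_left]
    rintro l hl1 hl2
    simp only [Finset.mem_image] at hl1 hl2
    obtain ⟨a, -, ha⟩ := hl1
    obtain ⟨b, -, hb⟩ := hl2
    have : (a ++ [true]).getLast? = (b ++ [false]).getLast? := by rw [ha, hb]
    simp [List.getLast?_append] at this
  rw [w, hset, Finset.card_union_of_disjoint hdisj,
    Finset.card_image_of_injective _ (fun a b hab => List.append_cancel_right hab),
    Finset.card_image_of_injective _ (fun a b hab => List.append_cancel_right hab)]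
  rfl

lemma w_succ_zero (ℓ : ℕ) : w (ℓ + 1) 0 = w ℓ 1 := by
  have hset : Wset (ℓ + 1) 0 = (Wset ℓ 1).image (· ++ [false]) := by
    ext l
    simp only [Finset.mem_image, mem_Wset]
    constructor
    · rintro ⟨hlen, hnn, hc⟩
      have hne : l ≠ [] := by intro h; subst h; simp at hlen
      have hdec := List.dropLast_append_getLast hne
      have hnnd : DyckNonneg l.dropLast := fun q hq => hnn q (hq.trans (List.dropLast_prefix l))
      have hlen' : l.dropLast.length = ℓ := by simp [List.length_dropLast, hlen]
      cases hl : l.getLast hne with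
      | true =>
        exfalso
        have h2 := hnnd l.dropLast (List.prefix_refl _)
        have hdec' : l.dropLast ++ [true] = l := by rw [← hl]; exact hdec
        have hct : l.count true = l.dropLast.count true + 1 := by rw [← hdec']; simp
        have hcf : l.count false = l.dropLast.count false := by rw [← hdec']; simp
        omega
      | false =>
        have hdec' : l.dropLast ++ [false] = l := by rw [← hl]; exact hdec
        have hct : l.count true = l.dropLast.count true := by rw [← hdec']; simp
        have hcf : l.count false = l.dropLast.count false + 1 := by rw [← hdec']; simp
        exact ⟨l.dropLast, ⟨hlen', hnnd, by omega⟩, hdec'⟩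
    · rintro ⟨a, ⟨hlen, hnn, hc⟩, rfl⟩
      exact ⟨by simp [hlen], nonneg_snoc hnn _ (Or.inr (by omega)),
        by simp [List.count_append]; omega⟩
  rw [w, hset, Finset.card_image_of_injective _ (fun a b hab => List.append_cancel_right hab)]
  rfl

end ApGFAux
namespace ApGFAux
open Finset List PowerSeries

/-- The Catalan number generating function. -/
noncomputable def Cgf : PowerSeries ℚ := PowerSeries.mk fun n => (catalan n : ℚ)

lemma Cgf_eq : Cgf = 1 + X * Cgf ^ 2 := by
  ext n
  cases n with
  | zero => simp [Cgf, map_add, coeff_zero_X_mul]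
  | succ n =>
    rw [map_add, coeff_one, if_neg (Nat.succ_ne_zero n), zero_add, coeff_succ_X_mul, pow_two,
      coeff_mul, Cgf, coeff_mk, catalan_succ']
    push_cast
    simp [coeff_mk]

lemma constantCoeff_Cgf : constantCoeff Cgf = 1 := by simp [Cgf]

lemma coeff_pow_zero (h : ℕ) : coeff 0 (Cgf ^ h) = 1 := by
  rw [coeff_zero_eq_constantCoeff, map_pow, constantCoeff_Cgf, one_pow]

/-- The key coefficient formula: `w (2q+h) h` is a coefficient of a Catalan power. -/
lemma w_coeff : ∀ ℓ q h : ℕ, ℓ = 2 * q + h → (w ℓ h : ℚ) = coeff q (Cgf ^ (h + 1)) := by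
  intro ℓ
  induction ℓ with
  | zero =>
    intro q h hq
    obtain ⟨rfl, rfl⟩ : q = 0 ∧ h = 0 := by omega
    simp [w_zero, coeff_zero_eq_constantCoeff, map_pow, constantCoeff_Cgf]
  | succ ℓ ih =>
    intro q h hq
    cases h with
    | zero =>
      obtain ⟨q', rfl⟩ : ∃ q', q = q' + 1 := ⟨q - 1, by omega⟩
      rw [w_succ_zero, ih q' 1 (by omega)]
      calc coeff q' (Cgf ^ (1 + 1)) = coeff (q' + 1) (X * Cgf ^ 2) := by
            norm_num [coeff_succ_X_mul]
        _ = coeff (q' + 1) (1 + X * Cgf ^ 2) := by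
            rw [map_add, coeff_one, if_neg (Nat.succ_ne_zero q'), zero_add]
        _ = coeff (q' + 1) (Cgf ^ (0 + 1)) := by rw [pow_one, ← Cgf_eq]
    | succ h =>
      rw [w_succ_pos]
      have e1 : (w ℓ h : ℚ) = coeff q (Cgf ^ (h + 1)) := ih q h (by omega)
      have key : (Cgf : PowerSeries ℚ) ^ (h + 1 + 1) = Cgf ^ (h + 1) + X * Cgf ^ (h + 3) := by
        calc Cgf ^ (h + 1 + 1) = Cgf ^ (h + 1) * Cgf := by ring
        _ = Cgf ^ (h + 1) * (1 + X * Cgf ^ 2) := by rw [← Cgf_eq]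
        _ = Cgf ^ (h + 1) + X * Cgf ^ (h + 3) := by ring
      rw [key, map_add]
      cases q with
      | zero =>
        have e2 : w ℓ (h + 2) = 0 := w_eq_zero_of_lt (by omega)
        rw [e2, coeff_zero_X_mul]
        push_cast
        rw [e1]
        try ring
      | succ q' =>
        have e2 : (w ℓ (h + 2) : ℚ) = coeff q' (Cgf ^ (h + 2 + 1)) := ih q' (h + 2) (by omega)
        rw [coeff_succ_X_mul]
        push_cast
        rw [e1, e2]

/-- The series `S` with coefficients `S_j = Σ_{h ≤ j} [x^(j-h)] C^(2h+4)`. -/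
noncomputable def Sgf : PowerSeries ℚ :=
  PowerSeries.mk fun j => ∑ h ∈ Finset.range (j + 1), coeff (j - h) (Cgf ^ (2 * h + 4))

/-- Partial sums used to analyze `Sgf`. -/
noncomputable def Pgf (n : ℕ) : PowerSeries ℚ :=
  ∑ h ∈ Finset.range (n + 1), X ^ h * Cgf ^ (2 * h + 4)

lemma coeff_Sgf_eq_Pgf {b j : ℕ} (hbj : b ≤ j) : coeff b Sgf = coeff b (Pgf j) := by
  rw [Sgf, coeff_mk, Pgf, map_sum]
  have step : ∀ h : ℕ, coeff b (X ^ h * Cgf ^ (2 * h + 4)) =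
      if h ≤ b then coeff (b - h) (Cgf ^ (2 * h + 4)) else 0 := by
    intro h
    rw [mul_comm, coeff_mul_X_pow']
  simp only [step]
  rw [← Finset.sum_subset (Finset.range_subset_range.mpr (show b + 1 ≤ j + 1 by omega))
      (fun x _ hx => by rw [if_neg]; simp at hx ⊢; omega)]
  refine Finset.sum_congr rfl fun h hh => ?_
  rw [if_pos (by simp at hh; omega)]

lemma Sgf_eq : (1 - X * Cgf ^ 2) * Sgf = Cgf ^ 4 := by
  ext j
  rw [sub_mul, one_mul, map_sub]
  have h1 : coeff j (X * Cgf ^ 2 * Sgf) = coeff j (X * Cgf ^ 2 * Pgf j) := by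
    rw [coeff_mul, coeff_mul]
    refine Finset.sum_congr rfl fun p hp => ?_
    rw [Finset.HasAntidiagonal.mem_antidiagonal] at hp
    rw [coeff_Sgf_eq_Pgf (show p.2 ≤ j by omega)]
  have h2 : X * Cgf ^ 2 * Pgf j + Cgf ^ 4 = Pgf j + X ^ (j + 1) * Cgf ^ (2 * (j + 1) + 4) := by
    simp only [Pgf, Finset.mul_sum]
    rw [Finset.sum_congr rfl
      (fun h _ => show X * Cgf ^ 2 * (X ^ h * Cgf ^ (2 * h + 4)) = X ^ (h+1) * Cgf ^ (2*(h+1)+4) by ring)]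
    have e := Finset.sum_range_succ' (fun h => X ^ h * Cgf ^ (2 * h + 4)) (j + 1)
    have e2 := Finset.sum_range_succ (fun h => X ^ h * Cgf ^ (2 * h + 4)) (j + 1)
    linear_combination e2 - e
  have h3 : coeff j (X ^ (j + 1) * Cgf ^ (2 * (j + 1) + 4)) = 0 := by
    rw [mul_comm, coeff_mul_X_pow']
    simp
  have h4 : coeff j Sgf = coeff j (Pgf j) := coeff_Sgf_eq_Pgf le_rfl
  have h5 := congrArg (coeff j) h2
  simp only [map_add] at h5
  rw [h3, add_zero] at h5
  rw [h1, h4]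
  linarith

end ApGFAux
namespace ApGFAux
open Finset List PowerSeries

lemma conv_zero {N h η : ℕ} (hpar : ¬ ∃ n, N = 2 * n + h + η) :
    (∑ p ∈ antidiagonal N, (w p.1 h : ℚ) * w p.2 η) = 0 := by
  refine Finset.sum_eq_zero fun p hp => ?_
  rw [Finset.HasAntidiagonal.mem_antidiagonal] at hp
  by_contra hne
  have h1 : w p.1 h ≠ 0 := by intro h0; simp [h0] at hne
  have h2 : w p.2 η ≠ 0 := by intro h0; simp [h0] at hne
  obtain ⟨q1, hq1⟩ := exists_two_mul h1
  obtain ⟨q2, hq2⟩ := exists_two_mul h2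
  exact hpar ⟨q1 + q2, by omega⟩

lemma conv_pos (n h η : ℕ) :
    (∑ p ∈ antidiagonal (2 * n + h + η), (w p.1 h : ℚ) * w p.2 η)
      = coeff n (Cgf ^ (h + 1) * Cgf ^ (η + 1)) := by
  rw [coeff_mul]
  refine Finset.sum_bij_ne_zero (fun p _ _ => ((p.1 - h) / 2, (p.2 - η) / 2)) ?_ ?_ ?_ ?_
  · rintro ⟨x, y⟩ h₁ h₂
    rw [Finset.HasAntidiagonal.mem_antidiagonal] at h₁ ⊢
    have hx : w x h ≠ 0 := by intro h0; simp [h0] at h₂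
    have hy : w y η ≠ 0 := by intro h0; simp [h0] at h₂
    obtain ⟨q1, hq1⟩ := exists_two_mul hx
    obtain ⟨q2, hq2⟩ := exists_two_mul hy
    simp only
    omega
  · rintro ⟨x, y⟩ h₁₁ h₁₂ ⟨x', y'⟩ h₂₁ h₂₂ heq
    rw [Finset.HasAntidiagonal.mem_antidiagonal] at h₁₁ h₂₁
    have hx : w x h ≠ 0 := by intro h0; simp [h0] at h₁₂
    have hy : w y η ≠ 0 := by intro h0; simp [h0] at h₁₂
    have hx' : w x' h ≠ 0 := by intro h0; simp [h0] at h₂₂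
    have hy' : w y' η ≠ 0 := by intro h0; simp [h0] at h₂₂
    obtain ⟨q1, hq1⟩ := exists_two_mul hx
    obtain ⟨q2, hq2⟩ := exists_two_mul hy
    obtain ⟨q1', hq1'⟩ := exists_two_mul hx'
    obtain ⟨q2', hq2'⟩ := exists_two_mul hy'
    simp only [Prod.mk.injEq] at heq ⊢
    omega
  · rintro ⟨u, v⟩ hb hgb
    rw [Finset.HasAntidiagonal.mem_antidiagonal] at hb
    refine ⟨(2 * u + h, 2 * v + η), ?_, ?_, ?_⟩
    · rw [Finset.HasAntidiagonal.mem_antidiagonal]; simp only; omega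
    · simp only
      rw [w_coeff (2 * u + h) u h rfl, w_coeff (2 * v + η) v η rfl]
      exact hgb
    · simp only [Prod.mk.injEq]
      omega
  · rintro ⟨x, y⟩ h₁ h₂
    have hx : w x h ≠ 0 := by intro h0; simp [h0] at h₂
    have hy : w y η ≠ 0 := by intro h0; simp [h0] at h₂
    obtain ⟨q1, hq1⟩ := exists_two_mul hx
    obtain ⟨q2, hq2⟩ := exists_two_mul hy
    simp only
    rw [w_coeff x q1 h hq1, w_coeff y q2 η hq2,
      show (x - h) / 2 = q1 by omega, show (y - η) / 2 = q2 by omega]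

lemma T_eq (i : ℕ) :
    (∑ p ∈ antidiagonal (2 * i), ∑ h ∈ Finset.range (p.1 + 1), (w p.1 h : ℚ) * w p.2 (h + 2))
      = coeff i (X * Sgf) := by
  have ext1 : ∀ p ∈ antidiagonal (2 * i),
      (∑ h ∈ Finset.range (p.1 + 1), (w p.1 h : ℚ) * w p.2 (h + 2))
        = ∑ h ∈ Finset.range (2 * i + 1), (w p.1 h : ℚ) * w p.2 (h + 2) := by
    intro p hp
    rw [Finset.HasAntidiagonal.mem_antidiagonal] at hp
    refine Finset.sum_subset (Finset.range_subset_range.mpr (by omega)) (fun x hx hnx => ?_)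
    simp only [Finset.mem_range] at hx hnx
    rw [w_eq_zero_of_lt (show p.1 < x by omega)]
    simp
  rw [Finset.sum_congr rfl ext1, Finset.sum_comm]
  have killer : (∑ h ∈ Finset.range (2 * i + 1), ∑ p ∈ antidiagonal (2 * i),
        (w p.1 h : ℚ) * w p.2 (h + 2))
      = ∑ h ∈ Finset.range i, ∑ p ∈ antidiagonal (2 * i), (w p.1 h : ℚ) * w p.2 (h + 2) := by
    refine (Finset.sum_subset (Finset.range_subset_range.mpr (by omega)) (fun h hh hnh => ?_)).symm
    simp only [Finset.mem_range] at hh hnh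
    exact conv_zero (by rintro ⟨n, hn⟩; omega)
  rw [killer]
  have inner : ∀ h ∈ Finset.range i,
      (∑ p ∈ antidiagonal (2 * i), (w p.1 h : ℚ) * w p.2 (h + 2))
        = coeff (i - h - 1) (Cgf ^ (2 * h + 4)) := by
    intro h hh
    rw [Finset.mem_range] at hh
    have e : 2 * i = 2 * (i - h - 1) + h + (h + 2) := by omega
    rw [e, conv_pos]
    congr 1
    rw [← pow_add]
    congr 1
    omega
  rw [Finset.sum_congr rfl inner]
  cases i with
  | zero => simp
  | succ i' =>
    rw [coeff_succ_X_mul, Sgf, coeff_mk]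
    refine Finset.sum_congr rfl fun h hh => ?_
    rw [show i' + 1 - h - 1 = i' - h by omega]

/-! ### Facts about `1/sqrt(1-4x)` -/

end ApGFAux
namespace ApGFAux
open Finset List PowerSeries

lemma C_ofNat (n : ℕ) [n.AtLeastTwo] : (C (R := ℚ)) (OfNat.ofNat n) = (OfNat.ofNat n : ℚ⟦X⟧) :=
  map_ofNat (C (R := ℚ)) n

lemma coeff_invSqrt (n : ℕ) : coeff n invSqrtGF = (Nat.centralBinom n : ℚ) := by
  simp [invSqrtGF, Nat.centralBinom]

lemma constantCoeff_invSqrt : constantCoeff invSqrtGF = 1 := by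
  simp [invSqrtGF]

lemma deriv_invSqrt : (1 - 4 * X) * d⁄dX ℚ invSqrtGF = 2 * invSqrtGF := by
  ext n
  rw [sub_mul, one_mul, map_sub, mul_assoc, ← C_ofNat 4, ← C_ofNat 2, coeff_C_mul, coeff_C_mul]
  cases n with
  | zero =>
    rw [coeff_zero_X_mul, coeff_derivative, coeff_invSqrt, coeff_invSqrt]
    norm_num [Nat.centralBinom]
  | succ n =>
    rw [coeff_succ_X_mul, coeff_derivative, coeff_derivative, coeff_invSqrt, coeff_invSqrt]
    have key : ((n + 1 : ℕ) + 1 : ℚ) * (Nat.centralBinom (n + 1 + 1) : ℚ)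
        = 2 * (2 * (n + 1 : ℕ) + 1) * (Nat.centralBinom (n + 1) : ℚ) := by
      exact_mod_cast congrArg (Nat.cast : ℕ → ℚ) (Nat.succ_mul_centralBinom_succ (n + 1))
    push_cast at key ⊢
    linarith [key]

lemma invSqrt_sq : invSqrtGF ^ 2 * (1 - 4 * X) = 1 := by
  have hg : d⁄dX ℚ (1 - 4 * X : ℚ⟦X⟧) = -4 := by
    rw [map_sub, Derivation.map_one_eq_zero]
    have h4 : (4 * X : ℚ⟦X⟧) = (4 : ℚ) • X := by rw [PowerSeries.smul_eq_C_mul, C_ofNat]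
    rw [h4, Derivation.map_smul, derivative_X, PowerSeries.smul_eq_C_mul, C_ofNat]
    ring
  have hp : d⁄dX ℚ (invSqrtGF ^ 2) = 2 * invSqrtGF * d⁄dX ℚ invSqrtGF := by
    rw [Derivation.leibniz_pow]
    simp only [smul_eq_mul, pow_one, nsmul_eq_mul]
    push_cast
    ring
  have hD : d⁄dX ℚ (invSqrtGF ^ 2 * (1 - 4 * X)) = d⁄dX ℚ 1 := by
    rw [Derivation.leibniz, hg, hp, Derivation.map_one_eq_zero]
    simp only [smul_eq_mul]
    linear_combination (2 * invSqrtGF) * deriv_invSqrt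
  refine PowerSeries.derivative.ext hD ?_
  rw [map_mul, map_pow, constantCoeff_invSqrt, map_sub, map_one, map_mul, constantCoeff_X]
  norm_num

lemma sqrt_factor : (1 - 2 * X * Cgf) ^ 2 = 1 - 4 * X := by
  linear_combination (-4 * X) * Cgf_eq

lemma invSqrt_eq : invSqrtGF * (1 - 2 * X * Cgf) = 1 := by
  set f := invSqrtGF * (1 - 2 * X * Cgf) with hf
  have hsq : f ^ 2 = 1 := by
    have : f ^ 2 = invSqrtGF ^ 2 * ((1 - 2 * X * Cgf) ^ 2) := by rw [hf]; ring
    rw [this, sqrt_factor, invSqrt_sq]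
  have hfactor : (f - 1) * (f + 1) = 0 := by linear_combination hsq
  rcases mul_eq_zero.mp hfactor with h | h
  · exact sub_eq_zero.mp h
  · exfalso
    have hc : constantCoeff f = -1 := by
      have := congrArg (constantCoeff (R := ℚ)) (eq_neg_of_add_eq_zero_left h)
      simpa using this
    rw [hf, map_mul, constantCoeff_invSqrt, map_sub, map_one] at hc
    simp [constantCoeff_X] at hc
    norm_num at hc

end ApGFAux
namespace ApGFAux
open Finset List PowerSeries
open scoped Classical

noncomputable def allBLe (N : ℕ) : Finset (List Bool) := (Finset.range (N + 1)).biUnion allB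

lemma mem_allBLe {N : ℕ} {l : List Bool} : l ∈ allBLe N ↔ l.length ≤ N := by
  simp [allBLe, mem_allB]

/-- The predicate of `AsymPeakMarked`. -/
def QuadCond (m : ℕ) (q : List Bool × ℕ × ℕ × List Bool) : Prop :=
  1 ≤ q.2.1 ∧ 1 ≤ q.2.2.1 ∧ q.2.1 ≠ q.2.2.1 ∧
  q.1.getLast? ≠ some true ∧
  q.2.2.2.head? ≠ some false ∧
  IsDyck (q.1 ++ List.replicate q.2.1 true ++ List.replicate q.2.2.1 false ++ q.2.2.2) ∧
  (q.1 ++ List.replicate q.2.1 true ++ List.replicate q.2.2.1 false ++ q.2.2.2).length = m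

noncomputable def Fqd (m : ℕ) : Finset (List Bool × ℕ × ℕ × List Bool) :=
  ((allBLe m) ×ˢ ((Finset.range (m + 1)) ×ˢ ((Finset.range (m + 1)) ×ˢ (allBLe m)))).filter
    (QuadCond m)

lemma mem_Fqd {m : ℕ} {q : List Bool × ℕ × ℕ × List Bool} : q ∈ Fqd m ↔ QuadCond m q := by
  obtain ⟨A, a, b, B⟩ := q
  simp only [Fqd, Finset.mem_filter, Finset.mem_product, mem_allBLe, Finset.mem_range]
  constructor
  · tauto
  · intro h
    refine ⟨⟨?_, ?_, ?_, ?_⟩, h⟩ <;>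
    · obtain ⟨-, -, -, -, -, -, hlen⟩ := h
      simp only [List.length_append, List.length_replicate] at hlen
      omega

lemma nat_card_eq (m : ℕ) : Nat.card (AsymPeakMarked m) = (Fqd m).card := by
  rw [← Nat.card_eq_finsetCard]
  refine Nat.card_congr (Equiv.subtypeEquivRight fun q => ?_)
  rw [mem_Fqd]
  exact Iff.rfl

lemma coNonneg_zero {l : List Bool} (h : DyckNonneg l) : CoNonneg 0 l := fun q hq => by
  simpa using h q hq

lemma isDyck_rn {l : List Bool} (h : IsDyck l) : IsDyck (rn l) := by
  obtain ⟨h1, h2⟩ := h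
  have hmem : l ∈ W'set l.length 0 := mem_W'set.mpr ⟨rfl, coNonneg_zero h1, by omega⟩
  have h3 := rn_mem_Wset hmem
  rw [mem_Wset] at h3
  exact ⟨h3.2.1, by omega⟩

lemma getLast?_rn_ne {l : List Bool} (h : l.head? ≠ some false) :
    (rn l).getLast? ≠ some true := by
  rw [getLast?_rn]
  cases l with
  | nil => simp
  | cons x t => cases x <;> simp_all

lemma head?_rn_ne {l : List Bool} (h : l.getLast? ≠ some true) :
    (rn l).head? ≠ some false := by
  rw [head?_rn]
  cases hl : l.getLast? with
  | none => simp
  | some x => cases x <;> simp_all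

/-- The reverse-negate involution on marked quadruples. -/
def swq (q : List Bool × ℕ × ℕ × List Bool) : List Bool × ℕ × ℕ × List Bool :=
  (rn q.2.2.2, q.2.2.1, q.2.1, rn q.1)

lemma swq_mem {m : ℕ} {q : List Bool × ℕ × ℕ × List Bool} (hq : q ∈ Fqd m) : swq q ∈ Fqd m := by
  rw [mem_Fqd] at hq ⊢
  obtain ⟨A, a, b, B⟩ := q
  dsimp only [swq, QuadCond] at hq ⊢
  obtain ⟨h1, h2, h3, h4, h5, h6, h7⟩ := hq
  have hrw : rn (A ++ List.replicate a true ++ List.replicate b false ++ B)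
      = rn B ++ List.replicate b true ++ List.replicate a false ++ rn A := by
    simp [rn_append, List.append_assoc]
  refine ⟨h2, h1, Ne.symm h3, getLast?_rn_ne h5, head?_rn_ne h4, ?_, ?_⟩
  · rw [← hrw]
    exact isDyck_rn h6
  · have := congrArg List.length hrw
    simp only [length_rn] at this
    simp only [List.length_append, List.length_replicate] at this h7 ⊢
    omega

lemma card_Fqd_double (m : ℕ) :
    (Fqd m).card = 2 * ((Fqd m).filter (fun q => q.2.2.1 < q.2.1)).card := by
  have hsplit := Finset.card_filter_add_card_filter_not
    (s := Fqd m) (p := fun q => q.2.2.1 < q.2.1)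
  have heq : ((Fqd m).filter (fun q => ¬ q.2.2.1 < q.2.1))
      = (Fqd m).filter (fun q => q.2.1 < q.2.2.1) := by
    refine Finset.filter_congr fun q hq => ?_
    have hne := (mem_Fqd.mp hq).2.2.1
    simp only [not_lt, eq_iff_iff]
    omega
  rw [heq] at hsplit
  have hbij : ((Fqd m).filter (fun q => q.2.1 < q.2.2.1)).card
      = ((Fqd m).filter (fun q => q.2.2.1 < q.2.1)).card := by
    refine Finset.card_nbij' swq swq ?_ ?_ ?_ ?_
    · intro q hq
      rw [Finset.mem_coe, Finset.mem_filter] at hq ⊢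
      exact ⟨swq_mem hq.1, hq.2⟩
    · intro q hq
      rw [Finset.mem_coe, Finset.mem_filter] at hq ⊢
      exact ⟨swq_mem hq.1, hq.2⟩
    · intro q _
      obtain ⟨A, a, b, B⟩ := q
      simp [swq]
    · intro q _
      obtain ⟨A, a, b, B⟩ := q
      simp [swq]
  omega

/-! ### Stripping trailing `true`s -/

def stripT (l : List Bool) : List Bool := (l.reverse.dropWhile (fun x => x)).reverse

def ttc (l : List Bool) : ℕ := (l.reverse.takeWhile (fun x => x)).length

lemma stripT_spec (l : List Bool) : stripT l ++ List.replicate (ttc l) true = l := by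
  have h1 := List.takeWhile_append_dropWhile (p := fun x : Bool => x) (l := l.reverse)
  have h2 : l.reverse.takeWhile (fun x : Bool => x) = List.replicate (ttc l) true := by
    rw [List.eq_replicate_iff]
    refine ⟨rfl, fun b hb => ?_⟩
    have := List.mem_takeWhile_imp hb
    simpa using this
  have h3 : List.replicate (ttc l) true = (l.reverse.takeWhile (fun x : Bool => x)).reverse := by
    rw [h2, List.reverse_replicate]
  rw [stripT, h3, ← List.reverse_append, h1, List.reverse_reverse]

lemma dropWhile_head?_not : ∀ (l : List Bool) (x : Bool),
    (l.dropWhile (fun b => b)).head? = some x → x = false := by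
  intro l
  induction l with
  | nil => simp
  | cons a t ih =>
    intro x h
    cases a with
    | false => rw [List.dropWhile_cons] at h; simp_all
    | true => rw [List.dropWhile_cons] at h; simp at h; exact ih x h

lemma getLast?_stripT (l : List Bool) : (stripT l).getLast? ≠ some true := by
  rw [stripT, List.getLast?_reverse]
  cases hd : (l.reverse.dropWhile (fun x => x)).head? with
  | none => simp
  | some x =>
    have := dropWhile_head?_not l.reverse x hd
    subst this
    simp

lemma stripT_append {A : List Bool} {c : ℕ} (hA : A.getLast? ≠ some true) :
    stripT (A ++ List.replicate c true) = A ∧ ttc (A ++ List.replicate c true) = c := by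
  have hrev : (A ++ List.replicate c true).reverse = List.replicate c true ++ A.reverse := by
    rw [List.reverse_append, List.reverse_replicate]
  have hh : A.reverse.head? ≠ some true := by rw [List.head?_reverse]; exact hA
  have htake : ∀ c : ℕ,
      (List.replicate c true ++ A.reverse).takeWhile (fun b : Bool => b) = List.replicate c true ∧
      (List.replicate c true ++ A.reverse).dropWhile (fun b : Bool => b) = A.reverse := by
    intro c
    induction c with
    | zero =>
      simp only [List.replicate_zero, List.nil_append]
      cases hr : A.reverse with
      | nil => simp
      | cons x t =>
        have hx : x = false := by
          rw [hr] at hh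
          cases x
          · rfl
          · simp at hh
        subst hx
        rw [List.takeWhile_cons_of_neg (by simp), List.dropWhile_cons_of_neg (by simp)]
        exact ⟨rfl, rfl⟩
    | succ c ihc =>
      simp only [List.replicate_succ, List.cons_append]
      rw [List.takeWhile_cons_of_pos (by simp), List.dropWhile_cons_of_pos (by simp)]
      exact ⟨by rw [ihc.1], ihc.2⟩
  obtain ⟨ht, hd⟩ := htake c
  constructor
  · rw [stripT, hrev, hd, List.reverse_reverse]
  · rw [ttc, hrev, ht, List.length_replicate]

end ApGFAux
namespace ApGFAux
open Finset List PowerSeries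
open scoped Classical

lemma quad_facts {m : ℕ} {A B : List Bool} {a b : ℕ}
    (hq : QuadCond m (A, a, b, B)) (hba : b < a) :
    DyckNonneg A ∧ A.count false ≤ A.count true ∧ 1 ≤ b ∧ B = true :: B.tail ∧
    A.count true + a + B.count true = A.count false + b + B.count false ∧
    A.length + a + b + B.length = m := by
  obtain ⟨h1, h2, h3, h4, h5, h6, h7⟩ := hq
  dsimp only at h1 h2 h3 h4 h5 h6 h7
  have hlen : A.length + a + b + B.length = m := by
    simp only [List.length_append, List.length_replicate] at h7
    omega
  have hcnt : A.count true + a + B.count true = A.count false + b + B.count false := by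
    have hh := h6.2
    simp only [List.count_append, List.count_replicate] at hh
    simp at hh
    omega
  have hNN : DyckNonneg A := fun qq hqq =>
    h6.1 qq ((hqq.trans (List.prefix_append _ _)).trans
      ((List.prefix_append _ _).trans (List.prefix_append _ _)))
  have hAc : A.count false ≤ A.count true := hNN A (List.prefix_refl A)
  have hBne : B ≠ [] := by
    intro hB
    rw [hB] at hcnt
    simp at hcnt
    omega
  have hBcons : B = true :: B.tail := by
    cases B with
    | nil => exact absurd rfl hBne
    | cons x t =>
      cases x
      · simp at h5
      · rfl
  exact ⟨hNN, hAc, h2, hBcons, hcnt, hlen⟩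

lemma Fmap_mem {m : ℕ} {p1 p2 h : ℕ} {A B : List Bool} {a b : ℕ}
    (hq : QuadCond m (A, a, b, B)) (hba : b < a)
    (hf2a : A.length + (a - b) - 1 = p1) (hf2b : B.length - 1 = p2)
    (hf3 : A.count true - A.count false + (a - b) - 1 = h) :
    (A ++ List.replicate (a - b - 1) true) ∈ Wset p1 h ∧ B.tail ∈ W'set p2 (h + 2) := by
  obtain ⟨hNN, hAc, hb1, hBcons, hcnt, hlen⟩ := quad_facts hq hba
  obtain ⟨-, -, -, -, -, h6, -⟩ := hq
  dsimp only at h6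
  have hcntT : B.count true = 1 + B.tail.count true := by
    conv_lhs => rw [hBcons]
    simp
    omega
  have hcntF : B.count false = B.tail.count false := by
    conv_lhs => rw [hBcons]
    simp
  constructor
  · rw [mem_Wset]
    refine ⟨by simp [List.length_append]; omega, dyckNonneg_append_replicate hNN, ?_⟩
    simp [List.count_append, List.count_replicate]
    omega
  · rw [mem_W'set]
    refine ⟨by simp [List.length_tail]; omega, ?_, by omega⟩
    intro qq hqq
    have hpre : (A ++ List.replicate a true ++ List.replicate b false ++ (true :: qq))
        <+: (A ++ List.replicate a true ++ List.replicate b false ++ B) := by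
      have h1 : (true :: qq) <+: B := by
        rw [hBcons]
        exact List.cons_prefix_cons.mpr ⟨rfl, hqq⟩
      obtain ⟨t, ht⟩ := h1
      exact ⟨t, by rw [← ht, List.append_assoc, List.append_assoc]⟩
    have h2 := h6.1 _ hpre
    simp only [List.count_append, List.count_replicate, List.count_cons] at h2
    simp at h2
    omega

lemma Gmap_mem {M i p1 p2 h : ℕ} (hi : i < M) (hp : p1 + p2 = 2 * i) (hh : h ≤ p1)
    {A' B'' : List Bool} (hA' : A' ∈ Wset p1 h) (hB'' : B'' ∈ W'set p2 (h + 2)) :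
    QuadCond (2 * (M + 1)) (stripT A', ttc A' + 1 + (M - i), M - i, true :: B'') ∧
    (M - i) < ttc A' + 1 + (M - i) ∧ M - (M - i) = i ∧
    (stripT A').length + ((ttc A' + 1 + (M - i)) - (M - i)) - 1 = p1 ∧
    (true :: B'').length - 1 = p2 ∧
    (stripT A').count true - (stripT A').count false + ((ttc A' + 1 + (M - i)) - (M - i)) - 1
      = h := by
  rw [mem_Wset] at hA'
  rw [mem_W'set] at hB''
  obtain ⟨hlenA', hNNA', hcntA'⟩ := hA'
  obtain ⟨hlenB'', hCo, hcntB''⟩ := hB''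
  set A := stripT A' with hA
  set r := ttc A' with hr
  have hAs : A ++ List.replicate r true = A' := stripT_spec A'
  have hlen1 : A.length + r = p1 := by
    have := congrArg List.length hAs
    simpa [List.length_append] using this.trans (congrArg id hlenA')
  have hcT : A.count true + r = A'.count true := by
    have := congrArg (List.count true) hAs
    simpa [List.count_append, List.count_replicate] using this
  have hcF : A.count false = A'.count false := by
    have := congrArg (List.count false) hAs
    simpa [List.count_append, List.count_replicate] using this
  have hNN : DyckNonneg A := fun qq hqq => hNNA' qq (hqq.trans ⟨List.replicate r true, hAs⟩)
  have hAc : A.count false ≤ A.count true := hNN A (List.prefix_refl A)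
  have hgetLast := getLast?_stripT A'
  set b := M - i with hb
  have hb1 : 1 ≤ b := by omega
  refine ⟨⟨by dsimp only; omega, by dsimp only; omega, by dsimp only; omega, by exact hgetLast,
    by simp, ?_, ?_⟩, by omega, by omega, by omega, by simp [hlenB''], by omega⟩
  · -- IsDyck
    dsimp only
    constructor
    · -- DyckNonneg
      intro qq hqq
      rcases prefix_append_cases hqq with hq1 | ⟨rr, hrr, rfl⟩
      · rcases prefix_append_cases hq1 with hq2 | ⟨r2, hr2, rfl⟩
        · rcases prefix_append_cases hq2 with hq3 | ⟨r3, hr3, rfl⟩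
          · exact hNN qq hq3
          · obtain ⟨hrep, hle⟩ := prefix_replicate hr3
            rw [hrep]
            simp [List.count_append, List.count_replicate]
            omega
        · obtain ⟨hrep, hle⟩ := prefix_replicate hr2
          rw [hrep]
          simp [List.count_append, List.count_replicate]
          omega
      · cases rr with
        | nil =>
          simp [List.count_append, List.count_replicate]
          omega
        | cons x t =>
          obtain ⟨hx, ht⟩ := List.cons_prefix_cons.mp hrr
          subst hx
          have h3 := hCo t ht
          simp only [List.count_append, List.count_replicate, List.count_cons]
          simp
          omega
    · -- balance
      simp only [List.count_append, List.count_replicate, List.count_cons]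
      simp
      omega
  · -- length
    dsimp only
    simp only [List.length_append, List.length_replicate, List.length_cons]
    omega

end ApGFAux
namespace ApGFAux
open Finset List PowerSeries
open scoped Classical

lemma card_GT (M : ℕ) :
    ((Fqd (2 * (M + 1))).filter (fun q => q.2.2.1 < q.2.1)).card
      = ∑ i ∈ Finset.range M, ∑ p ∈ antidiagonal (2 * i), ∑ h ∈ Finset.range (p.1 + 1),
          w p.1 h * w' p.2 (h + 2) := by
  have hf1 : ∀ q ∈ (Fqd (2 * (M + 1))).filter (fun q => q.2.2.1 < q.2.1),
      (fun q : List Bool × ℕ × ℕ × List Bool => M - q.2.2.1) q ∈ Finset.range M := by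
    intro q hq
    rw [Finset.mem_filter] at hq
    obtain ⟨A, a, b, B⟩ := q
    have hba : b < a := hq.2
    obtain ⟨hNN, hAc, hb1, hBcons, hcnt, hlen⟩ := quad_facts (mem_Fqd.mp hq.1) hba
    rw [Finset.mem_range]
    dsimp only
    omega
  rw [Finset.card_eq_sum_card_fiberwise hf1]
  refine Finset.sum_congr rfl fun i hi => ?_
  rw [Finset.mem_range] at hi
  have hf2 : ∀ q ∈ ((Fqd (2 * (M + 1))).filter (fun q => q.2.2.1 < q.2.1)).filter
        (fun a => M - a.2.2.1 = i),
      (fun q : List Bool × ℕ × ℕ × List Bool =>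
          (q.1.length + (q.2.1 - q.2.2.1) - 1, q.2.2.2.length - 1)) q
        ∈ antidiagonal (2 * i) := by
    intro q hq
    rw [Finset.mem_filter, Finset.mem_filter] at hq
    obtain ⟨⟨hq0, hgt⟩, hfib1⟩ := hq
    obtain ⟨A, a, b, B⟩ := q
    have hba : b < a := hgt
    have hi1 : M - b = i := hfib1
    obtain ⟨hNN, hAc, hb1, hBcons, hcnt, hlen⟩ := quad_facts (mem_Fqd.mp hq0) hba
    rw [Finset.HasAntidiagonal.mem_antidiagonal]
    have hBlen : B.length = B.tail.length + 1 := by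
      conv_lhs => rw [hBcons]
      simp
    dsimp only
    omega
  rw [Finset.card_eq_sum_card_fiberwise hf2]
  refine Finset.sum_congr rfl fun p hp => ?_
  obtain ⟨p1, p2⟩ := p
  rw [Finset.HasAntidiagonal.mem_antidiagonal] at hp
  dsimp only at hp ⊢
  have hf3 : ∀ q ∈ (((Fqd (2 * (M + 1))).filter (fun q => q.2.2.1 < q.2.1)).filter
        (fun a => M - a.2.2.1 = i)).filter
        (fun a => (a.1.length + (a.2.1 - a.2.2.1) - 1, a.2.2.2.length - 1) = (p1, p2)),
      (fun q : List Bool × ℕ × ℕ × List Bool =>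
          q.1.count true - q.1.count false + (q.2.1 - q.2.2.1) - 1) q
        ∈ Finset.range (p1 + 1) := by
    intro q hq
    rw [Finset.mem_filter, Finset.mem_filter, Finset.mem_filter] at hq
    obtain ⟨⟨⟨hq0, hgt⟩, hfib1⟩, hfib2⟩ := hq
    obtain ⟨A, a, b, B⟩ := q
    have hba : b < a := hgt
    have hfa : A.length + (a - b) - 1 = p1 := congrArg Prod.fst hfib2
    have hcle : A.count true ≤ A.length := List.count_le_length
    obtain ⟨hNN, hAc, hb1, hBcons, hcnt, hlen⟩ := quad_facts (mem_Fqd.mp hq0) hba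
    rw [Finset.mem_range]
    dsimp only
    omega
  rw [Finset.card_eq_sum_card_fiberwise hf3]
  refine Finset.sum_congr rfl fun h hh => ?_
  rw [Finset.mem_range] at hh
  rw [w, w', ← Finset.card_product]
  refine Finset.card_nbij'
    (fun q => (q.1 ++ List.replicate (q.2.1 - q.2.2.1 - 1) true, q.2.2.2.tail))
    (fun x => (stripT x.1, ttc x.1 + 1 + (M - i), M - i, true :: x.2)) ?_ ?_ ?_ ?_
  · intro q hq
    rw [Finset.mem_coe, Finset.mem_filter, Finset.mem_filter, Finset.mem_filter, Finset.mem_filter] at hq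
    obtain ⟨⟨⟨⟨hq0, hgt⟩, hfib1⟩, hfib2⟩, hfib3⟩ := hq
    obtain ⟨A, a, b, B⟩ := q
    have hba : b < a := hgt
    have hfa : A.length + (a - b) - 1 = p1 := congrArg Prod.fst hfib2
    have hfb : B.length - 1 = p2 := congrArg Prod.snd hfib2
    have hmm := Fmap_mem (mem_Fqd.mp hq0) hba hfa hfb hfib3
    rw [Finset.mem_coe, Finset.mem_product]
    exact ⟨hmm.1, hmm.2⟩
  · intro x hx
    rw [Finset.mem_coe, Finset.mem_product] at hx
    obtain ⟨x1, x2⟩ := x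
    have big := Gmap_mem hi hp (by omega) hx.1 hx.2
    rw [Finset.mem_coe, Finset.mem_filter, Finset.mem_filter, Finset.mem_filter, Finset.mem_filter]
    refine ⟨⟨⟨⟨mem_Fqd.mpr big.1, big.2.1⟩, big.2.2.1⟩, ?_⟩, big.2.2.2.2.2⟩
    dsimp only
    rw [Prod.mk.injEq]
    exact ⟨big.2.2.2.1, big.2.2.2.2.1⟩
  · intro q hq
    rw [Finset.mem_coe, Finset.mem_filter, Finset.mem_filter, Finset.mem_filter, Finset.mem_filter] at hq
    obtain ⟨⟨⟨⟨hq0, hgt⟩, hfib1⟩, hfib2⟩, hfib3⟩ := hq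
    obtain ⟨A, a, b, B⟩ := q
    have hba : b < a := hgt
    have hi1 : M - b = i := hfib1
    obtain ⟨hNN, hAc, hb1, hBcons, hcnt, hlen⟩ := quad_facts (mem_Fqd.mp hq0) hba
    have h4 : A.getLast? ≠ some true := (mem_Fqd.mp hq0).2.2.2.1
    have hsa := stripT_append (A := A) (c := a - b - 1) h4
    dsimp only
    rw [Prod.mk.injEq, Prod.mk.injEq, Prod.mk.injEq]
    refine ⟨hsa.1, ?_, by omega, hBcons.symm⟩
    rw [hsa.2]
    omega
  · intro x hx
    obtain ⟨x1, x2⟩ := x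
    dsimp only
    rw [Prod.mk.injEq]
    constructor
    · rw [show ttc x1 + 1 + (M - i) - (M - i) - 1 = ttc x1 by omega]
      exact stripT_spec x1
    · rfl

end ApGFAux
namespace ApGFAux
open Finset List PowerSeries
open scoped Classical

lemma apcount (M : ℕ) :
    Nat.card (AsymPeakMarked (2 * (M + 1)))
      = 2 * ∑ i ∈ Finset.range M, ∑ p ∈ antidiagonal (2 * i), ∑ h ∈ Finset.range (p.1 + 1),
          w p.1 h * w' p.2 (h + 2) := by
  rw [nat_card_eq, card_Fqd_double, card_GT]

lemma apQ (n : ℕ) : (ap n : ℚ) = 2 * ∑ i ∈ Finset.range (n + 2), coeff i (X * Sgf) := by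
  rw [ap, show 2 * (n + 3) = 2 * (n + 2 + 1) by ring, apcount (n + 2)]
  push_cast
  congr 1
  refine Finset.sum_congr rfl fun i _ => ?_
  rw [← T_eq i]
  refine Finset.sum_congr rfl fun p _ => Finset.sum_congr rfl fun h _ => ?_
  rw [w'_eq_w]

lemma h2S (k : ℕ) : coeff k (2 * Sgf) = 2 * coeff k Sgf := by
  rw [← C_ofNat 2, coeff_C_mul]

lemma one_sub_X_mul_apgf : (1 - X) * PowerSeries.mk (fun n => (ap n : ℚ)) = 2 * Sgf := by
  ext n
  rw [sub_mul, one_mul, map_sub, h2S]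
  cases n with
  | zero =>
    rw [coeff_zero_X_mul, coeff_mk, apQ 0]
    norm_num [Finset.sum_range_succ, coeff_zero_X_mul, coeff_succ_X_mul]
  | succ n =>
    rw [coeff_succ_X_mul, coeff_mk, coeff_mk, apQ (n + 1), apQ n]
    rw [show n + 1 + 2 = n + 2 + 1 by ring, Finset.sum_range_succ, coeff_succ_X_mul]
    ring

end ApGFAux
/-- Σ_{n≥0} ap(n) x^n = (1/x^3)·((1-3x)/((1-x)·sqrt(1-4x)) − 1), stated with
denominators cleared: (1-x)·x^3·Σ ap(n)x^n = (1-3x)/sqrt(1-4x) − (1-x). -/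
theorem ap_generating_function :
    (1 - (X : PowerSeries ℚ)) * X ^ 3 * PowerSeries.mk (fun n => (ap n : ℚ))
      = (1 - 3 * X) * invSqrtGF - (1 - X) := by
  have h1 : (1 - (X : PowerSeries ℚ)) * X ^ 3 * PowerSeries.mk (fun n => (ap n : ℚ))
      = X ^ 3 * (2 * ApGFAux.Sgf) := by
    rw [← ApGFAux.one_sub_X_mul_apgf]; ring
  rw [h1]
  have hS := ApGFAux.Sgf_eq
  have hB := ApGFAux.invSqrt_eq
  have hC := ApGFAux.Cgf_eq
  set C := ApGFAux.Cgf with hCdef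
  have hu : ((1 - X * C ^ 2) * (1 - 2 * X * C) : PowerSeries ℚ) ≠ 0 := by
    intro hcon
    have h0 := congrArg (constantCoeff (R := ℚ)) hcon
    rw [map_mul, map_sub, map_sub, map_mul, map_mul, map_mul, map_pow, map_one,
      constantCoeff_X] at h0
    norm_num at h0
  apply mul_right_cancel₀ hu
  calc X ^ 3 * (2 * ApGFAux.Sgf) * ((1 - X * C ^ 2) * (1 - 2 * X * C))
      = 2 * X ^ 3 * ((1 - X * C ^ 2) * ApGFAux.Sgf) * (1 - 2 * X * C) := by ring
    _ = 2 * X ^ 3 * C ^ 4 * (1 - 2 * X * C) := by rw [hS]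
    _ = (1 - 3 * X) * (1 - X * C ^ 2) - (1 - X) * ((1 - X * C ^ 2) * (1 - 2 * X * C)) := by
        linear_combination (-2*X - 2*X^2*C + 2*X^2*C^2 + 4*X^3*C^3) * hC
    _ = ((1 - 3 * X) * invSqrtGF - (1 - X)) * ((1 - X * C ^ 2) * (1 - 2 * X * C)) := by
        linear_combination (-(1 - 3*X) * (1 - X * C ^ 2)) * hB
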